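/- Let Ω ⊂ ℂⁿ be a bounded domain and suppose there exists a continuous function u on closure(Ω), harmonic (or plurisubharmonic) on Ω, that attains a strict interior-free maximum value 1 only on a compact subset of the boundary while u = 0 on another nonempty part of the boundary. If u were a uniform limit on closure(Ω) of functions plurisubharmonic on neighborhoods of closure(Ω), then u would satisfy the maximum principle on closure(Ω); in particular, any continuous function u on the closed disc Δ̄ of radius 2 in ℂ with u = 0 on {|z| = 2}, u = 1 on a compact polar-complement set C ⊂ (−1/2,1/2), and u harmonic off C, is not in PSH(closure(Δ \ C)) ∩ C(closure(Δ \ C)). -/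

import Mathlib

open Metric MeasureTheory

noncomputable section

/-- A function `u` is subharmonic on `D ⊆ ℂ` if it is upper semicontinuous on `D` and
satisfies the sub-mean-value inequality over circles. -/
def SubharmonicOn (u : ℂ → ℝ) (D : Set ℂ) : Prop :=
  UpperSemicontinuousOn u D ∧
  ∀ z ∈ D, ∀ r : ℝ, 0 < r → (∀ t : ℂ, ‖t‖ ≤ r → z + t ∈ D) →
    u z ≤ (1 / (2 * Real.pi)) * ∫ θ in (0:ℝ)..(2 * Real.pi),
      u (z + (r : ℂ) * Complex.exp (θ * Complex.I))

/-- Points of a thin set `K` on the real axis are small in norm. -/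
lemma aux_K_norm {K : Set ℂ} (hKsub : K ⊆ {z : ℂ | z.im = 0 ∧ |z.re| < 1 / 2})
    {z : ℂ} (hz : z ∈ K) : ‖z‖ < 1 / 2 := by
  obtain ⟨him, hre⟩ := hKsub hz
  calc ‖z‖ ≤ |z.re| + |z.im| := Complex.norm_le_abs_re_add_abs_im z
    _ = |z.re| := by rw [him, abs_zero, add_zero]
    _ < 1 / 2 := hre

/-- The closed ball of radius 2 is contained in the closure of `ball 0 2 \ K`. -/
lemma aux_closure (K : Set ℂ) (hKsub : K ⊆ {z : ℂ | z.im = 0 ∧ |z.re| < 1 / 2}) :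
    Metric.closedBall (0:ℂ) 2 ⊆ closure (Metric.ball (0:ℂ) 2 \ K) := by
  intro z hz
  rw [mem_closedBall, dist_zero_right] at hz
  by_cases hzK : z ∈ K
  · -- approach from the imaginary direction
    have hzn : ‖z‖ < 1 / 2 := aux_K_norm hKsub hzK
    rw [mem_closure_iff_seq_limit]
    refine ⟨fun n => z + Complex.I * ((1 / (n + 1) : ℝ) : ℂ), fun n => ?_, ?_⟩
    · constructor
      · rw [mem_ball, dist_zero_right]
        have h1 : ‖Complex.I * ((1 / (n + 1) : ℝ) : ℂ)‖ ≤ 1 := by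
          rw [norm_mul, Complex.norm_I, one_mul, Complex.norm_real, Real.norm_eq_abs]
          rw [abs_of_pos (by positivity)]
          rw [div_le_one (by positivity)]
          linarith [Nat.cast_nonneg (α := ℝ) n]
        calc ‖z + Complex.I * ((1 / (n + 1) : ℝ) : ℂ)‖
            ≤ ‖z‖ + ‖Complex.I * ((1 / (n + 1) : ℝ) : ℂ)‖ := norm_add_le _ _
          _ < 2 := by linarith
      · intro hmem
        have := (hKsub hmem).1
        simp only [Complex.add_im, Complex.mul_im, Complex.I_re, Complex.I_im,
          Complex.ofReal_re, Complex.ofReal_im, (hKsub hzK).1] at this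
        have hpos : (0:ℝ) < 1 / (n + 1) := by positivity
        simp only [zero_add, zero_mul, one_mul, mul_zero, sub_zero, add_zero] at this
        linarith
    · have h0 : Filter.Tendsto (fun n : ℕ => ((1 / (n + 1) : ℝ) : ℂ)) Filter.atTop (nhds 0) := by
        rw [show ((0:ℂ)) = ((0:ℝ):ℂ) by norm_num]
        exact (Complex.continuous_ofReal.tendsto 0).comp tendsto_one_div_add_atTop_nhds_zero_nat
      have := (tendsto_const_nhds (x := z) (f := Filter.atTop (α := ℕ))).add
        ((tendsto_const_nhds (x := Complex.I) (f := Filter.atTop (α := ℕ))).mul h0)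
      simpa using this
  · rcases lt_or_eq_of_le hz with hlt | heq
    · exact subset_closure ⟨mem_ball_zero_iff.mpr hlt, hzK⟩
    · -- on the sphere: approach radially
      rw [mem_closure_iff_seq_limit]
      refine ⟨fun n => (Complex.ofReal ((n + 1 : ℝ) / (n + 2 : ℝ))) * z, fun n => ?_, ?_⟩
      · have hfrac0 : (0:ℝ) < (n + 1 : ℝ) / (n + 2 : ℝ) := by positivity
        have hfrac1 : (n + 1 : ℝ) / (n + 2 : ℝ) < 1 := by
          rw [div_lt_one (by positivity)]; linarith
        have hfrac2 : (1:ℝ) / 2 ≤ (n + 1 : ℝ) / (n + 2 : ℝ) := by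
          rw [div_le_div_iff₀ (by norm_num) (by positivity)]
          have : (0:ℝ) ≤ n := Nat.cast_nonneg n
          linarith
        have hn : ‖(Complex.ofReal ((n + 1 : ℝ) / (n + 2 : ℝ))) * z‖
            = ((n + 1 : ℝ) / (n + 2 : ℝ)) * 2 := by
          rw [norm_mul, Complex.norm_real, Real.norm_eq_abs, abs_of_pos hfrac0, heq]
        constructor
        · rw [mem_ball, dist_zero_right, hn]; nlinarith
        · intro hmem
          have h1 := aux_K_norm hKsub hmem
          rw [hn] at h1
          nlinarith
      · have h0 : Filter.Tendsto (fun n : ℕ => (Complex.ofReal ((n + 1 : ℝ) / (n + 2 : ℝ))))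
            Filter.atTop (nhds 1) := by
          rw [show ((1:ℂ)) = ((1:ℝ):ℂ) by norm_num]
          apply (Complex.continuous_ofReal.tendsto 1).comp
          have : (fun n : ℕ => (n + 1 : ℝ) / (n + 2 : ℝ))
              = fun n : ℕ => 1 - 1 / ((n:ℝ) + 1 + 1) := by
            funext n
            field_simp
            ring
          rw [this]
          have h2 : Filter.Tendsto (fun n : ℕ => 1 / (n + 1 + 1 : ℝ)) Filter.atTop (nhds 0) := by
            have := (tendsto_one_div_add_atTop_nhds_zero_nat (𝕜 := ℝ)).comp
              (Filter.tendsto_add_atTop_nat 1)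
            simp only [Function.comp_def] at this
            convert this using 2 with m
            push_cast
            ring
          simpa using (tendsto_const_nhds (x := (1:ℝ))).sub h2
        have := h0.mul (tendsto_const_nhds (x := z))
        simpa using this

/-- Maximum principle for continuous subharmonic functions on a neighborhood of the
closed ball: the maximum over the closed ball is attained on the sphere. -/
lemma aux_maxprinciple {V : Set ℂ} {v : ℂ → ℝ} (hVopen : IsOpen V)
    (hBV : Metric.closedBall (0:ℂ) 2 ⊆ V) (hsub : SubharmonicOn v V)
    (hvc : ContinuousOn v V) :
    ∃ p ∈ Metric.sphere (0:ℂ) 2, ∀ x ∈ Metric.closedBall (0:ℂ) 2, v x ≤ v p := by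
  have hπ := Real.pi_pos
  have h2pi : (0:ℝ) < 2 * Real.pi := by positivity
  obtain ⟨z₀, hz₀B, hz₀max⟩ := (isCompact_closedBall (0:ℂ) 2).exists_isMaxOn
    ⟨0, by simp⟩ (hvc.mono hBV)
  set M := v z₀ with hM
  -- key propagation: if v attains M at z and the closed disc of radius s around z lies
  -- in the closed ball, then v = M on the circle of radius s around z.
  have key : ∀ z, v z = M → ∀ s : ℝ, 0 < s →
      Metric.closedBall z s ⊆ Metric.closedBall (0:ℂ) 2 →
      ∀ w, dist w z = s → v w = M := by
    intro z hz s hs hsB w hw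
    have hzV : V ∈ nhds z → True := fun _ => trivial
    have hzmem : z ∈ Metric.closedBall z s := mem_closedBall_self hs.le
    have hzV' : z ∈ V := hBV (hsB hzmem)
    set f : ℝ → ℝ := fun θ => v (z + (s : ℂ) * Complex.exp (θ * Complex.I)) with hf
    have hmem : ∀ θ : ℝ, z + (s : ℂ) * Complex.exp (θ * Complex.I)
        ∈ Metric.closedBall z s := by
      intro θ
      rw [mem_closedBall, dist_eq_norm, add_sub_cancel_left, norm_mul,
        Complex.norm_real, Real.norm_eq_abs, abs_of_pos hs]
      have : ‖Complex.exp (θ * Complex.I)‖ = 1 :=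
        Complex.norm_exp_ofReal_mul_I θ
      rw [this, mul_one]
    have hφc : Continuous (fun θ : ℝ => z + (s : ℂ) * Complex.exp (θ * Complex.I)) := by
      continuity
    have hfc : Continuous f := hvc.comp_continuous hφc fun θ => hBV (hsB (hmem θ))
    have hle : ∀ θ : ℝ, f θ ≤ M := fun θ => hz₀max (hsB (hmem θ))
    have hineq := hsub.2 z hzV' s hs (fun t ht => hBV (hsB (by
      rw [mem_closedBall, dist_eq_norm, add_sub_cancel_left]; exact ht)))
    rw [hz] at hineq
    have hint : IntervalIntegrable f volume 0 (2 * Real.pi) :=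
      hfc.intervalIntegrable 0 (2 * Real.pi)
    have hconst : (∫ _ in (0:ℝ)..(2 * Real.pi), M) = 2 * Real.pi * M := by
      simp [mul_comm]
    have hup : (∫ θ in (0:ℝ)..(2 * Real.pi), f θ) ≤ 2 * Real.pi * M := by
      rw [← hconst]
      exact intervalIntegral.integral_mono_on h2pi.le hint intervalIntegrable_const
        fun x _ => hle x
    have hlow : 2 * Real.pi * M ≤ ∫ θ in (0:ℝ)..(2 * Real.pi), f θ := by
      rw [div_mul_eq_mul_div, one_mul, le_div_iff₀ h2pi] at hineq
      linarith
    have hIeq : (∫ θ in (0:ℝ)..(2 * Real.pi), f θ) = 2 * Real.pi * M :=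
      le_antisymm hup hlow
    set g : ℝ → ℝ := fun θ => M - f θ with hg
    have hgc : Continuous g := continuous_const.sub hfc
    have hgint : (∫ θ in (0:ℝ)..(2 * Real.pi), g θ) = 0 := by
      rw [hg]
      rw [intervalIntegral.integral_sub intervalIntegrable_const hint, hconst, hIeq, sub_self]
    have hgae := (intervalIntegral.integral_eq_zero_iff_of_le_of_nonneg_ae h2pi.le
      (Filter.Eventually.of_forall fun θ => sub_nonneg.2 (hle θ))
      (intervalIntegrable_const.sub hint)).mp hgint
    have hopen : Set.EqOn g 0 (Set.Ioo 0 (2 * Real.pi)) :=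
      MeasureTheory.Measure.eqOn_open_of_ae_eq
        (ae_restrict_of_ae_restrict_of_subset Set.Ioo_subset_Ioc_self hgae)
        isOpen_Ioo hgc.continuousOn continuousOn_const
    have hIcc : Set.EqOn g 0 (Set.Icc 0 (2 * Real.pi)) := by
      have := hopen.closure hgc continuous_const
      rwa [closure_Ioo (by linarith : (0:ℝ) ≠ 2 * Real.pi)] at this
    -- now express w via its argument
    have habs : ‖w - z‖ = s := by
      rw [← Complex.dist_eq]; exact hw
    have hwz : w = z + (s : ℂ) * Complex.exp ((Complex.arg (w - z) : ℝ) * Complex.I) := by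
      have h := Complex.norm_mul_exp_arg_mul_I (w - z)
      rw [habs] at h
      rw [h]; ring
    set a := Complex.arg (w - z) with ha
    have hapi : a ≤ Real.pi := Complex.arg_le_pi _
    have hnegpi : -Real.pi < a := Complex.neg_pi_lt_arg _
    rcases le_or_gt 0 a with h0a | h0a
    · have hmemIcc : a ∈ Set.Icc 0 (2 * Real.pi) := ⟨h0a, by linarith⟩
      have := hIcc hmemIcc
      simp only [hg, Pi.zero_apply, sub_eq_zero] at this
      rw [hf] at this
      rw [hwz]
      exact this.symm
    · have hmemIcc : a + 2 * Real.pi ∈ Set.Icc 0 (2 * Real.pi) := ⟨by linarith, by linarith⟩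
      have h0 := hIcc hmemIcc
      simp only [hg, Pi.zero_apply, sub_eq_zero] at h0
      rw [hf] at h0
      have hexp : Complex.exp (((a + 2 * Real.pi : ℝ) : ℂ) * Complex.I)
          = Complex.exp ((a : ℝ) * Complex.I) := by
        push_cast
        rw [add_mul, Complex.exp_add, Complex.exp_two_pi_mul_I, mul_one]
      have h0' : M = v (z + (s:ℂ) * Complex.exp (((a + 2 * Real.pi : ℝ) : ℂ) * Complex.I)) := h0
      rw [hexp] at h0'
      rw [hwz]
      exact h0'.symm
  -- either the maximizer is on the sphere, or v ≡ M on the ball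
  rw [mem_closedBall, dist_zero_right] at hz₀B
  rcases lt_or_eq_of_le hz₀B with hlt | heq
  swap
  · exact ⟨z₀, by rw [mem_sphere, dist_zero_right, heq], fun x hx => hz₀max hx⟩
  · -- z₀ is interior; propagate v = M to the whole ball
    set S : Set ℂ := {z : ℂ | z ∈ Metric.ball (0:ℂ) 2 ∧ v z = M} with hS
    set T : Set ℂ := {z : ℂ | z ∈ Metric.ball (0:ℂ) 2 ∧ v z ≠ M} with hT
    have hSopen : IsOpen S := by
      rw [Metric.isOpen_iff]
      rintro z ⟨hzb, hzM⟩
      rw [mem_ball, dist_zero_right] at hzb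
      refine ⟨(2 - ‖z‖) / 2, by linarith, ?_⟩
      intro w hwz
      rw [mem_ball] at hwz
      have hwb : w ∈ Metric.ball (0:ℂ) 2 := by
        rw [mem_ball, dist_zero_right]
        have : ‖w‖ ≤ dist w z + ‖z‖ := by
          rw [dist_eq_norm]
          calc ‖w‖ = ‖(w - z) + z‖ := by ring_nf
            _ ≤ ‖w - z‖ + ‖z‖ := norm_add_le _ _
        linarith
      by_cases hwzeq : w = z
      · exact ⟨hwb, by rw [hwzeq]; exact hzM⟩
      · refine ⟨hwb, key z hzM (dist w z) (dist_pos.mpr hwzeq) ?_ w rfl⟩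
        intro x hx
        rw [mem_closedBall] at hx ⊢
        calc dist x 0 ≤ dist x z + dist z 0 := dist_triangle _ _ _
          _ ≤ dist w z + ‖z‖ := by rw [dist_zero_right]; linarith
          _ ≤ 2 := by linarith
    have hTopen : IsOpen T := by
      have : T = Metric.ball (0:ℂ) 2 ∩ v ⁻¹' {x : ℝ | x ≠ M} := rfl
      rw [this]
      exact ContinuousOn.isOpen_inter_preimage
        (hvc.mono (ball_subset_closedBall.trans hBV)) isOpen_ball isOpen_ne
    have hdisj : Disjoint S T := by
      rw [Set.disjoint_left]
      rintro z ⟨_, hz1⟩ ⟨_, hz2⟩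
      exact hz2 hz1
    have hcover : Metric.ball (0:ℂ) 2 ⊆ S ∪ T := by
      intro z hz
      by_cases h : v z = M
      · exact Or.inl ⟨hz, h⟩
      · exact Or.inr ⟨hz, h⟩
    have hz₀ball : z₀ ∈ Metric.ball (0:ℂ) 2 := by
      rw [mem_ball, dist_zero_right]; exact hlt
    have hball : Metric.ball (0:ℂ) 2 ⊆ S :=
      IsPreconnected.subset_left_of_subset_union hSopen hTopen hdisj hcover
        ⟨z₀, hz₀ball, hz₀ball, rfl⟩ (convex_ball (0:ℂ) 2).isPreconnected
    -- extend to the boundary point 2 by continuity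
    have h2B : (2:ℂ) ∈ Metric.closedBall (0:ℂ) 2 := by
      rw [mem_closedBall, dist_zero_right]
      norm_num
    have h2sphere : (2:ℂ) ∈ Metric.sphere (0:ℂ) 2 := by
      rw [mem_sphere, dist_zero_right]
      norm_num
    have hmemcl : (2:ℂ) ∈ closure (Metric.ball (0:ℂ) 2) := by
      rw [closure_ball (0:ℂ) (by norm_num : (2:ℝ) ≠ 0)]
      exact h2B
    have hne : (nhdsWithin (2:ℂ) (Metric.ball (0:ℂ) 2)).NeBot :=
      mem_closure_iff_nhdsWithin_neBot.mp hmemcl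
    have hca : ContinuousAt v 2 := hvc.continuousAt (hVopen.mem_nhds (hBV h2B))
    have h1 : Filter.Tendsto v (nhdsWithin (2:ℂ) (Metric.ball (0:ℂ) 2)) (nhds (v 2)) :=
      hca.tendsto.mono_left nhdsWithin_le_nhds
    have h2 : Filter.Tendsto v (nhdsWithin (2:ℂ) (Metric.ball (0:ℂ) 2)) (nhds M) := by
      apply Filter.Tendsto.congr' _ (tendsto_const_nhds (x := M))
      exact Filter.eventually_of_mem self_mem_nhdsWithin fun x hx => ((hball hx).2).symm
    have hv2 : v 2 = M := tendsto_nhds_unique h1 h2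
    exact ⟨2, h2sphere, fun x hx => by rw [hv2]; exact hz₀max hx⟩

theorem stmt18 (K : Set ℂ) (hKc : IsCompact K) (hKne : K.Nonempty)
    (hKsub : K ⊆ {z : ℂ | z.im = 0 ∧ |z.re| < 1 / 2})
    (D : Set ℂ) (hD : D = Metric.ball (0:ℂ) 2 \ K)
    (u : ℂ → ℝ) (huc : ContinuousOn u (closure D))
    (hharm : SubharmonicOn u D ∧ SubharmonicOn (fun z => -u z) D)
    (hu0 : ∀ z ∈ Metric.sphere (0:ℂ) 2, u z = 0)
    (hu1 : ∀ z ∈ K, u z = 1) :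
    ¬ (∀ ε : ℝ, 0 < ε → ∃ (V : Set ℂ) (v : ℂ → ℝ), IsOpen V ∧ closure D ⊆ V ∧
        SubharmonicOn v V ∧ ContinuousOn v V ∧ ∀ z ∈ closure D, |u z - v z| ≤ ε) := by
  intro H
  obtain ⟨V, v, hVopen, hclV, hsub, hvc, happ⟩ := H (1/4) (by norm_num)
  have hBcl : Metric.closedBall (0:ℂ) 2 ⊆ closure D := by
    rw [hD]; exact aux_closure K hKsub
  have hBV : Metric.closedBall (0:ℂ) 2 ⊆ V := hBcl.trans hclV
  obtain ⟨p, hp, hmax⟩ := aux_maxprinciple hVopen hBV hsub hvc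
  obtain ⟨k, hk⟩ := hKne
  have hkB : k ∈ Metric.closedBall (0:ℂ) 2 := by
    rw [mem_closedBall, dist_zero_right]
    linarith [aux_K_norm hKsub hk]
  have hkcl : k ∈ closure D := hBcl hkB
  have hpcl : p ∈ closure D := hBcl (sphere_subset_closedBall hp)
  have h1 := happ k hkcl
  have h2 := happ p hpcl
  have h3 := hmax k hkB
  rw [hu1 k hk] at h1
  rw [hu0 p hp] at h2
  have h1' := abs_le.mp h1
  have h2' := abs_le.mp h2
  obtain ⟨h1a, h1b⟩ := h1'
  obtain ⟨h2a, h2b⟩ := h2'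
  linarith
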